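/- arXiv:2203.15193 — 2 statements merged into one kernel-verified Lean document; each statement's English description precedes it below -/
import Mathlib

section
/- de Caen's lower bound on the probability of a union: for any finite sequence of events A_1, …, A_N in a probability space, each of positive probability, P(⋃_{l=1}^N A_l) ≥ ∑_{l=1}^N P(A_l)² / (∑_{l'=1}^N P(A_l ∩ A_{l'})). -/
open MeasureTheory Finset

/-- de Caen's lower bound on the probability of a union. -/
theorem stmt_1 {Ω : Type*} [MeasurableSpace Ω] (μ : Measure Ω) [IsProbabilityMeasure μ]
    (N : ℕ) (A : Fin N → Set Ω) (hmeas : ∀ l, MeasurableSet (A l))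
    (hpos : ∀ l, 0 < (μ (A l)).toReal) :
    ∑ l, ((μ (A l)).toReal) ^ 2 / (∑ l', (μ (A l ∩ A l')).toReal)
      ≤ (μ (⋃ l, A l)).toReal := by
  classical
  -- atoms of the Boolean algebra generated by the events
  set B : Finset (Fin N) → Set Ω := fun T => {ω | ∀ l, ω ∈ A l ↔ l ∈ T} with hBdef
  have hBmeas : ∀ T, MeasurableSet (B T) := by
    intro T
    have hEq : B T = ⋂ l, (if l ∈ T then A l else (A l)ᶜ) := by
      ext ω
      simp only [hBdef, Set.mem_setOf_eq, Set.mem_iInter]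
      constructor
      · intro h l
        by_cases hl : l ∈ T
        · simpa [hl] using (h l).mpr hl
        · simp only [hl, if_false, Set.mem_compl_iff]
          exact fun hw => hl ((h l).mp hw)
      · intro h l
        by_cases hl : l ∈ T
        · have := h l; simp only [hl, if_true] at this; simp [hl, this]
        · have := h l; simp only [hl, if_false, Set.mem_compl_iff] at this
          simp [hl, this]
    rw [hEq]
    exact MeasurableSet.iInter fun l => by
      by_cases hl : l ∈ T
      · simpa [hl] using hmeas l
      · simpa [hl] using (hmeas l).compl
  have hmemB : ∀ (ω : Ω) (T : Finset (Fin N)),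
      ω ∈ B T ↔ T = Finset.univ.filter (fun l => ω ∈ A l) := by
    intro ω T
    constructor
    · intro h
      ext l
      simpa [Finset.mem_filter] using (h l).symm
    · rintro rfl l
      simp [hBdef]
  -- measure of any union of atoms is a sum
  have hsum : ∀ (s : Finset (Finset (Fin N))) (S : Set Ω),
      (∀ ω, ω ∈ S ↔ Finset.univ.filter (fun l => ω ∈ A l) ∈ s) →
      (μ S).toReal = ∑ T ∈ s, (μ (B T)).toReal := by
    intro s S hS
    have hSeq : S = ⋃ T ∈ s, B T := by
      ext ω
      simp only [Set.mem_iUnion, hS]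
      constructor
      · intro h
        exact ⟨_, h, (hmemB ω _).mpr rfl⟩
      · rintro ⟨T, hT, hωT⟩
        exact ((hmemB ω T).mp hωT) ▸ hT
    have hd : (↑s : Set (Finset (Fin N))).PairwiseDisjoint B := by
      intro T hT T' hT' hne
      refine Set.disjoint_left.mpr fun ω hω hω' => hne ?_
      rw [(hmemB ω T).mp hω, (hmemB ω T').mp hω']
    rw [hSeq, measure_biUnion_finset hd (fun T _ => hBmeas T),
      ENNReal.toReal_sum (fun T _ => measure_ne_top μ _)]
  set p : Finset (Fin N) → ℝ := fun T => (μ (B T)).toReal with hpdef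
  have hp0 : ∀ T, 0 ≤ p T := fun T => ENNReal.toReal_nonneg
  have hA : ∀ l, (μ (A l)).toReal = ∑ T ∈ univ.filter (fun T => l ∈ T), p T := by
    intro l
    exact hsum _ _ (fun ω => by simp)
  have hAA : ∀ l l', (μ (A l ∩ A l')).toReal
      = ∑ T ∈ univ.filter (fun T => l ∈ T ∧ l' ∈ T), p T := by
    intro l l'
    exact hsum _ _ (fun ω => by simp)
  have hU : (μ (⋃ l, A l)).toReal
      = ∑ T ∈ univ.filter (fun T : Finset (Fin N) => T.Nonempty), p T := by
    refine hsum _ _ (fun ω => ?_)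
    simp [Set.mem_iUnion, Finset.filter_nonempty_iff]
  -- denominator rewrite
  have hden : ∀ l, (∑ l', (μ (A l ∩ A l')).toReal)
      = ∑ T ∈ univ.filter (fun T => l ∈ T), (T.card : ℝ) * p T := by
    intro l
    calc ∑ l', (μ (A l ∩ A l')).toReal
        = ∑ l', ∑ T ∈ univ.filter (fun T => l ∈ T ∧ l' ∈ T), p T :=
          Finset.sum_congr rfl fun l' _ => hAA l l'
      _ = ∑ l', ∑ T : Finset (Fin N), if l ∈ T ∧ l' ∈ T then p T else 0 := by
          simp [Finset.sum_filter]
      _ = ∑ T : Finset (Fin N), ∑ l', if l ∈ T ∧ l' ∈ T then p T else 0 :=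
          Finset.sum_comm
      _ = ∑ T : Finset (Fin N), if l ∈ T then (T.card : ℝ) * p T else 0 := by
          refine Finset.sum_congr rfl fun T _ => ?_
          by_cases hl : l ∈ T
          · simp only [hl, true_and, if_true]
            rw [Finset.sum_ite_mem, Finset.univ_inter, Finset.sum_const,
              nsmul_eq_mul]
          · simp [hl]
      _ = ∑ T ∈ univ.filter (fun T => l ∈ T), (T.card : ℝ) * p T :=
          (Finset.sum_filter _ _).symm
  -- Cauchy–Schwarz step
  have hCS : ∀ l, ((μ (A l)).toReal) ^ 2
      ≤ (∑ T ∈ univ.filter (fun T => l ∈ T), (T.card : ℝ) * p T)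
        * (∑ T ∈ univ.filter (fun T => l ∈ T), p T / T.card) := by
    intro l
    rw [hA l]
    have key := Finset.sum_mul_sq_le_sq_mul_sq (univ.filter (fun T => l ∈ T))
      (fun T => Real.sqrt ((T.card : ℝ) * p T)) (fun T => Real.sqrt (p T / T.card))
    have hL : ∀ T ∈ univ.filter (fun T : Finset (Fin N) => l ∈ T),
        Real.sqrt ((T.card : ℝ) * p T) * Real.sqrt (p T / T.card) = p T := by
      intro T hT
      have hc : (0 : ℝ) < T.card := by
        have : l ∈ T := (Finset.mem_filter.mp hT).2
        exact_mod_cast Finset.card_pos.mpr ⟨l, this⟩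
      rw [← Real.sqrt_mul (by positivity)]
      have : (T.card : ℝ) * p T * (p T / T.card) = p T ^ 2 := by
        field_simp
      rw [this, Real.sqrt_sq (hp0 T)]
    have hsq1 : ∀ T ∈ univ.filter (fun T : Finset (Fin N) => l ∈ T),
        Real.sqrt ((T.card : ℝ) * p T) ^ 2 = (T.card : ℝ) * p T := by
      intro T _
      exact Real.sq_sqrt (by positivity)
    have hsq2 : ∀ T ∈ univ.filter (fun T : Finset (Fin N) => l ∈ T),
        Real.sqrt (p T / T.card) ^ 2 = p T / T.card := by
      intro T _
      exact Real.sq_sqrt (by positivity)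
    rw [Finset.sum_congr rfl hL, Finset.sum_congr rfl hsq1,
      Finset.sum_congr rfl hsq2] at key
    exact key
  -- denominator positivity
  have hDpos : ∀ l, 0 < ∑ l', (μ (A l ∩ A l')).toReal := by
    intro l
    refine Finset.sum_pos' (fun l' _ => ENNReal.toReal_nonneg) ⟨l, Finset.mem_univ l, ?_⟩
    simpa [Set.inter_self] using hpos l
  -- put it together
  have hstep : ∀ l, ((μ (A l)).toReal) ^ 2 / (∑ l', (μ (A l ∩ A l')).toReal)
      ≤ ∑ T ∈ univ.filter (fun T => l ∈ T), p T / T.card := by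
    intro l
    rw [div_le_iff₀ (hDpos l), hden l]
    calc ((μ (A l)).toReal) ^ 2
        ≤ (∑ T ∈ univ.filter (fun T => l ∈ T), (T.card : ℝ) * p T)
          * (∑ T ∈ univ.filter (fun T => l ∈ T), p T / T.card) := hCS l
      _ = (∑ T ∈ univ.filter (fun T => l ∈ T), p T / T.card)
          * (∑ T ∈ univ.filter (fun T => l ∈ T), (T.card : ℝ) * p T) := mul_comm _ _
  calc ∑ l, ((μ (A l)).toReal) ^ 2 / (∑ l', (μ (A l ∩ A l')).toReal)
      ≤ ∑ l, ∑ T ∈ univ.filter (fun T => l ∈ T), p T / T.card :=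
        Finset.sum_le_sum fun l _ => hstep l
    _ = ∑ l, ∑ T : Finset (Fin N), if l ∈ T then p T / T.card else 0 := by
        simp [Finset.sum_filter]
    _ = ∑ T : Finset (Fin N), ∑ l, if l ∈ T then p T / T.card else 0 :=
        Finset.sum_comm
    _ = ∑ T : Finset (Fin N), (T.card : ℝ) * (p T / T.card) := by
        refine Finset.sum_congr rfl fun T _ => ?_
        rw [Finset.sum_ite_mem, Finset.univ_inter, Finset.sum_const, nsmul_eq_mul]
    _ = ∑ T ∈ univ.filter (fun T : Finset (Fin N) => T.Nonempty), p T := by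
        rw [Finset.sum_filter]
        refine Finset.sum_congr rfl fun T _ => ?_
        by_cases hT : T.Nonempty
        · have hc : (0 : ℝ) < T.card := by exact_mod_cast Finset.card_pos.mpr hT
          rw [if_pos hT]
          field_simp
        · simp [hT, Finset.not_nonempty_iff_eq_empty.mp hT]
    _ = (μ (⋃ l, A l)).toReal := (hU).symm
end

section
/- Jensen-type bound for the ternary source mutual information: for nonnegative reals p₀₁, p₁₀, p₀₂, p₁₂ with 3p₀₁ + 3p₀₂ ≤ 1, 3p₁₀ + 3p₁₂ ≤ 1, and 3p₀₂ + 3p₀₁ − 3p₁₀ ≥ 0, 3p₁₂ − 3p₀₁ + 3p₁₀ ≥ 0, 3(p₀₂ + p₀₁ − p₁₀) + 3(p₁₂ − p₀₁ + p₁₀) ≤ 1, one has H₃(3p₀₁, 3p₀₂) + H₃(3p₁₀, 3p₁₂) + H₃(3p₀₂ + 3p₀₁ − 3p₁₀, 3p₁₂ − 3p₀₁ + 3p₁₀) ≤ 2·H₃(3(p₀₁+p₁₀)/2, 3(p₀₂+p₁₂)/2) + H₃(3(p₀₂+p₁₂)/2, 3(p₀₂+p₁₂)/2), with equality if and only if p₀₁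 = p₁₀ and p₀₂ = p₁₂. -/
open Real

/-- Ternary entropy of the probability vector `(a, b, 1 - a - b)` (natural log,
with the convention `0 log 0 = 0`). -/
noncomputable def H3 (a b : ℝ) : ℝ :=
  -(a * Real.log a) - b * Real.log b - (1 - a - b) * Real.log (1 - a - b)

lemma mlog_mid (x y : ℝ) (hx : 0 ≤ x) (hy : 0 ≤ y) :
    2 * (((x + y) / 2) * log ((x + y) / 2)) ≤ x * log x + y * log y := by
  have h := Real.convexOn_mul_log.2 (Set.mem_Ici.2 hx) (Set.mem_Ici.2 hy)
    (by norm_num : (0:ℝ) ≤ 1/2) (by norm_num : (0:ℝ) ≤ 1/2) (by norm_num)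
  simp only [smul_eq_mul] at h
  rw [show (1/2:ℝ) * x + 1/2 * y = (x + y) / 2 by ring] at h
  linarith

lemma mlog_mid_lt (x y : ℝ) (hx : 0 ≤ x) (hy : 0 ≤ y) (hne : x ≠ y) :
    2 * (((x + y) / 2) * log ((x + y) / 2)) < x * log x + y * log y := by
  have h := Real.strictConvexOn_mul_log.2 (Set.mem_Ici.2 hx) (Set.mem_Ici.2 hy) hne
    (by norm_num : (0:ℝ) < 1/2) (by norm_num : (0:ℝ) < 1/2) (by norm_num)
  simp only [smul_eq_mul] at h
  rw [show (1/2:ℝ) * x + 1/2 * y = (x + y) / 2 by ring] at h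
  linarith

lemma H3_comm (a b : ℝ) : H3 a b = H3 b a := by
  unfold H3; ring_nf

lemma H3_mid (a b c d : ℝ) (ha : 0 ≤ a) (hb : 0 ≤ b) (hc : 0 ≤ c) (hd : 0 ≤ d)
    (hab : a + b ≤ 1) (hcd : c + d ≤ 1) :
    H3 a b + H3 c d ≤ 2 * H3 ((a + c) / 2) ((b + d) / 2) := by
  have h1 := mlog_mid a c ha hc
  have h2 := mlog_mid b d hb hd
  have h3 := mlog_mid (1 - a - b) (1 - c - d) (by linarith) (by linarith)
  unfold H3
  rw [show (1:ℝ) - (a + c) / 2 - (b + d) / 2 = ((1 - a - b) + (1 - c - d)) / 2 by ring]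
  linarith

lemma H3_mid_lt (a b c d : ℝ) (ha : 0 ≤ a) (hb : 0 ≤ b) (hc : 0 ≤ c) (hd : 0 ≤ d)
    (hab : a + b ≤ 1) (hcd : c + d ≤ 1) (hne : a ≠ c ∨ b ≠ d) :
    H3 a b + H3 c d < 2 * H3 ((a + c) / 2) ((b + d) / 2) := by
  have h1 := mlog_mid a c ha hc
  have h2 := mlog_mid b d hb hd
  have h3 := mlog_mid (1 - a - b) (1 - c - d) (by linarith) (by linarith)
  have key : 2 * (((a + c) / 2) * log ((a + c) / 2)) + 2 * (((b + d) / 2) * log ((b + d) / 2))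
      < a * log a + c * log c + (b * log b + d * log d) := by
    rcases hne with h | h
    · have := mlog_mid_lt a c ha hc h; linarith
    · have := mlog_mid_lt b d hb hd h; linarith
  unfold H3
  rw [show (1:ℝ) - (a + c) / 2 - (b + d) / 2 = ((1 - a - b) + (1 - c - d)) / 2 by ring]
  linarith

/-- Jensen-type bound for the ternary source mutual information, with equality
iff `p₀₁ = p₁₀` and `p₀₂ = p₁₂`. -/
theorem stmt_4 (p01 p10 p02 p12 : ℝ)
    (h01 : 0 ≤ p01) (h10 : 0 ≤ p10) (h02 : 0 ≤ p02) (h12 : 0 ≤ p12)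
    (hrow0 : 3 * p01 + 3 * p02 ≤ 1) (hrow1 : 3 * p10 + 3 * p12 ≤ 1)
    (hrow2a : 0 ≤ 3 * p02 + 3 * p01 - 3 * p10)
    (hrow2b : 0 ≤ 3 * p12 - 3 * p01 + 3 * p10)
    (hrow2c : 3 * (p02 + p01 - p10) + 3 * (p12 - p01 + p10) ≤ 1) :
    H3 (3 * p01) (3 * p02) + H3 (3 * p10) (3 * p12) +
        H3 (3 * p02 + 3 * p01 - 3 * p10) (3 * p12 - 3 * p01 + 3 * p10)
      ≤ 2 * H3 (3 * (p01 + p10) / 2) (3 * (p02 + p12) / 2) +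
          H3 (3 * (p02 + p12) / 2) (3 * (p02 + p12) / 2) ∧
    (H3 (3 * p01) (3 * p02) + H3 (3 * p10) (3 * p12) +
        H3 (3 * p02 + 3 * p01 - 3 * p10) (3 * p12 - 3 * p01 + 3 * p10)
      = 2 * H3 (3 * (p01 + p10) / 2) (3 * (p02 + p12) / 2) +
          H3 (3 * (p02 + p12) / 2) (3 * (p02 + p12) / 2)
      ↔ p01 = p10 ∧ p02 = p12) := by
  set a3 := 3 * p02 + 3 * p01 - 3 * p10 with ha3
  set b3 := 3 * p12 - 3 * p01 + 3 * p10 with hb3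
  -- bound for the third term
  have hthird : H3 a3 b3 ≤ H3 (3 * (p02 + p12) / 2) (3 * (p02 + p12) / 2) := by
    have h := H3_mid a3 b3 b3 a3 hrow2a hrow2b hrow2b hrow2a
      (by rw [ha3, hb3]; linarith) (by rw [ha3, hb3]; linarith)
    rw [H3_comm b3 a3] at h
    rw [show (a3 + b3) / 2 = 3 * (p02 + p12) / 2 by rw [ha3, hb3]; ring,
      show (b3 + a3) / 2 = 3 * (p02 + p12) / 2 by rw [ha3, hb3]; ring] at h
    linarith
  have hpair : H3 (3 * p01) (3 * p02) + H3 (3 * p10) (3 * p12)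
      ≤ 2 * H3 (3 * (p01 + p10) / 2) (3 * (p02 + p12) / 2) := by
    have h := H3_mid (3 * p01) (3 * p02) (3 * p10) (3 * p12)
      (by linarith) (by linarith) (by linarith) (by linarith) hrow0 hrow1
    rw [show (3 * p01 + 3 * p10) / 2 = 3 * (p01 + p10) / 2 by ring,
      show (3 * p02 + 3 * p12) / 2 = 3 * (p02 + p12) / 2 by ring] at h
    exact h
  refine ⟨by linarith, ?_, ?_⟩
  · intro heq
    by_contra hne
    have hor : (3 * p01 : ℝ) ≠ 3 * p10 ∨ (3 * p02 : ℝ) ≠ 3 * p12 := by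
      by_contra h
      push_neg at h
      exact hne ⟨by linarith [h.1], by linarith [h.2]⟩
    have h := H3_mid_lt (3 * p01) (3 * p02) (3 * p10) (3 * p12)
      (by linarith) (by linarith) (by linarith) (by linarith) hrow0 hrow1 hor
    rw [show (3 * p01 + 3 * p10) / 2 = 3 * (p01 + p10) / 2 by ring,
      show (3 * p02 + 3 * p12) / 2 = 3 * (p02 + p12) / 2 by ring] at h
    linarith
  · rintro ⟨h1, h2⟩
    subst h1; subst h2
    rw [show a3 = 3 * p02 by rw [ha3]; ring, show b3 = 3 * p02 by rw [hb3]; ring,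
      show 3 * (p01 + p01) / 2 = 3 * p01 by ring,
      show 3 * (p02 + p02) / 2 = 3 * p02 by ring]
    ring
end
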